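/- Let b₀, b₁ ∈ ℕ^ℕ be strictly increasing with b₀(0)=0, and suppose b₀ ≤* b₁. Let φ be a sequence with φ(n) ⊆ 2^{[b₀(n),b₀(n+1))} and |φ(n)|/2^{b₀(n+1)-b₀(n)} ≤ 2^{-n} for all n. Then, with b₁* defined by b₁*(0)=0, b₁*(n+1)=b₁(b₁*(n)+1), there exists a sequence φ* with φ*(n) ⊆ 2^{[b₁*(n),b₁*(n+1))} satisfying |φ*(n)|/2^{b₁*(n+1)-b₁*(n)} ≤ 2^{-n} for all but finitely many n, such that H_{b₀,φ} ⊆ H_{b₁*,φ*}. -/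

import Mathlib

open Filter

/-- Let `b₀, b₁` be strictly increasing with `b₀ 0 = 0` and `b₀ ≤* b₁`, and let `φ n` be
sets of functions `[b₀ n, b₀ (n+1)) → 2` with `|φ n| * 2^n ≤ 2^(b₀ (n+1) - b₀ n)` for all
`n`.  With `b₁*` defined by `b₁* 0 = 0`, `b₁* (n+1) = b₁ (b₁* n + 1)`, there is a sequence
`φ*` with `φ* n ⊆ 2^[b₁* n, b₁* (n+1))` satisfying `|φ* n| * 2^n ≤ 2^(b₁* (n+1) - b₁* n)`
for all but finitely many `n`, such that `H_{b₀,φ} ⊆ H_{b₁*,φ*}`. -/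
theorem stmt7 (b₀ b₁ bs : ℕ → ℕ) (hb₀ : StrictMono b₀) (hb₀0 : b₀ 0 = 0)
    (hb₁ : StrictMono b₁) (hle : ∀ᶠ n in Filter.atTop, b₀ n ≤ b₁ n)
    (hbs0 : bs 0 = 0) (hbs : ∀ n, bs (n + 1) = b₁ (bs n + 1))
    (φ : (n : ℕ) → Finset (↥(Finset.Ico (b₀ n) (b₀ (n + 1))) → Bool))
    (hφ : ∀ n, (φ n).card * 2 ^ n ≤ 2 ^ (b₀ (n + 1) - b₀ n)) :
    ∃ ψ : (n : ℕ) → Finset (↥(Finset.Ico (bs n) (bs (n + 1))) → Bool),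
      (∀ᶠ n in Filter.atTop, (ψ n).card * 2 ^ n ≤ 2 ^ (bs (n + 1) - bs n)) ∧
      ∀ x : ℕ → Bool,
        (∀ᶠ n in Filter.atTop,
          (fun i : ↥(Finset.Ico (b₀ n) (b₀ (n + 1))) => x i.1) ∈ φ n) →
        (∀ᶠ n in Filter.atTop,
          (fun i : ↥(Finset.Ico (bs n) (bs (n + 1))) => x i.1) ∈ ψ n) := by
  classical
  rw [eventually_atTop] at hle
  obtain ⟨N, hN⟩ := hle
  have hbs_ge : ∀ n, n ≤ bs n := by
    intro n
    induction n with
    | zero => omega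
    | succ k ih =>
      rw [hbs]
      have := hb₁.le_apply (x := bs k + 1)
      omega
  have hex : ∀ n, ∃ m, bs n ≤ b₀ m := fun n => ⟨bs n, hb₀.le_apply⟩
  set m : ℕ → ℕ := fun n => Nat.find (hex n) with hm
  have hma : ∀ n, bs n ≤ b₀ (m n) := fun n => Nat.find_spec (hex n)
  have hmb : ∀ n, m n ≤ bs n := fun n => Nat.find_le hb₀.le_apply
  have hbs_b0 : ∀ n, N ≤ n → b₀ (n + 1) ≤ bs (n + 1) := by
    intro n hn
    rw [hbs]
    have h1 : b₀ (n + 1) ≤ b₀ (bs n + 1) := hb₀.monotone (by have := hbs_ge n; omega)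
    have h2 : b₀ (bs n + 1) ≤ b₁ (bs n + 1) := hN _ (by have := hbs_ge n; omega)
    omega
  have hmc : ∀ n, N + 1 ≤ n → n ≤ m n := by
    intro n hn
    have h1 : b₀ n ≤ bs n := by
      obtain ⟨k, rfl⟩ : ∃ k, n = k + 1 := ⟨n - 1, by omega⟩
      exact hbs_b0 k (by omega)
    exact hb₀.le_iff_le.mp (le_trans h1 (hma n))
  have hmd : ∀ n, N ≤ n → b₀ (m n + 1) ≤ bs (n + 1) := by
    intro n hn
    rw [hbs]
    have h1 : b₀ (m n + 1) ≤ b₀ (bs n + 1) := hb₀.monotone (by have := hmb n; omega)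
    have h2 : b₀ (bs n + 1) ≤ b₁ (bs n + 1) := hN _ (by have := hbs_ge n; omega)
    omega
  have hsub : ∀ n, N ≤ n →
      Finset.Ico (b₀ (m n)) (b₀ (m n + 1)) ⊆ Finset.Ico (bs n) (bs (n + 1)) := by
    intro n hn i hi
    rw [Finset.mem_Ico] at hi ⊢
    have := hma n
    have := hmd n hn
    omega
  refine ⟨fun n =>
    if h : Finset.Ico (b₀ (m n)) (b₀ (m n + 1)) ⊆ Finset.Ico (bs n) (bs (n + 1)) then
      Finset.univ.filter (fun s : ↥(Finset.Ico (bs n) (bs (n + 1))) → Bool =>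
        (fun i : ↥(Finset.Ico (b₀ (m n)) (b₀ (m n + 1))) => s ⟨i.1, h i.2⟩) ∈ φ (m n))
    else ∅, ?_, ?_⟩
  · rw [eventually_atTop]
    refine ⟨N + 1, fun n hn => ?_⟩
    have h := hsub n (by omega)
    simp only [dif_pos h]
    set big := Finset.Ico (bs n) (bs (n + 1)) with hbig
    set small := Finset.Ico (b₀ (m n)) (b₀ (m n + 1)) with hsmall
    have hsc : small.card = b₀ (m n + 1) - b₀ (m n) := Nat.card_Ico _ _
    have hbc : big.card = bs (n + 1) - bs n := Nat.card_Ico _ _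
    have hcle : small.card ≤ big.card := Finset.card_le_card h
    -- injection into product
    have hcard : (Finset.univ.filter (fun s : ↥big → Bool =>
        (fun i : ↥small => s ⟨i.1, h i.2⟩) ∈ φ (m n))).card
        ≤ (φ (m n)).card * 2 ^ (big.card - small.card) := by
      have := Finset.card_le_card_of_injOn
        (f := fun s : ↥big → Bool =>
          ((fun i : ↥small => s ⟨i.1, h i.2⟩),
           (fun i : ↥(big \ small) => s ⟨i.1, Finset.sdiff_subset i.2⟩)))
        (s := Finset.univ.filter (fun s : ↥big → Bool =>
          (fun i : ↥small => s ⟨i.1, h i.2⟩) ∈ φ (m n)))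
        (t := (φ (m n)) ×ˢ Finset.univ)
        (by
          intro s hs
          rw [Finset.mem_coe, Finset.mem_filter] at hs
          exact Finset.mem_product.mpr ⟨hs.2, Finset.mem_univ _⟩)
        (by
          intro s hs s' hs' heq
          obtain ⟨h1, h2⟩ := Prod.mk.injEq .. ▸ heq
          funext i
          by_cases hi : i.1 ∈ small
          · have := congrFun h1 ⟨i.1, hi⟩
            simpa using this
          · have hid : i.1 ∈ big \ small := Finset.mem_sdiff.mpr ⟨i.2, hi⟩
            have := congrFun h2 ⟨i.1, hid⟩
            simpa using this)
      calc _ ≤ ((φ (m n)) ×ˢ (Finset.univ : Finset (↥(big \ small) → Bool))).card := this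
        _ = (φ (m n)).card * 2 ^ (big.card - small.card) := by
            rw [Finset.card_product, Finset.card_univ, Fintype.card_fun, Fintype.card_coe,
              Fintype.card_bool, Finset.card_sdiff_of_subset h]
    calc _ ≤ (φ (m n)).card * 2 ^ (big.card - small.card) * 2 ^ n := by
            exact Nat.mul_le_mul hcard le_rfl
      _ ≤ (φ (m n)).card * 2 ^ (big.card - small.card) * 2 ^ (m n) := by
            exact Nat.mul_le_mul le_rfl (Nat.pow_le_pow_right (by norm_num) (hmc n hn))
      _ = (φ (m n)).card * 2 ^ (m n) * 2 ^ (big.card - small.card) := by ring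
      _ ≤ 2 ^ (b₀ (m n + 1) - b₀ (m n)) * 2 ^ (big.card - small.card) :=
            Nat.mul_le_mul (hφ (m n)) le_rfl
      _ = 2 ^ (small.card + (big.card - small.card)) := by rw [hsc, pow_add]
      _ = 2 ^ big.card := by rw [Nat.add_sub_cancel' hcle]
      _ = 2 ^ (bs (n + 1) - bs n) := by rw [hbc]
  · intro x hx
    rw [eventually_atTop] at hx ⊢
    obtain ⟨K, hK⟩ := hx
    refine ⟨max (N + 1) K, fun n hn => ?_⟩
    have h := hsub n (by omega)
    simp only [dif_pos h, Finset.mem_filter]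
    refine ⟨Finset.mem_univ _, ?_⟩
    exact hK (m n) (le_trans (le_trans (le_max_right _ _) hn) (hmc n (le_trans (le_max_left _ _) hn)))
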